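/- (Validity characterization, forward direction) Suppose y + Σⱼ αⱼzⱼ ≥ β holds for every (y,z) ∈ Q. Then for every k with 0 ≤ k ≤ ν, Σ_{j≤k} αⱼ + f_k(α) + h_{k+1} ≥ β, where f_k(α) := min{Σ_{j>k} αⱼzⱼ : z ∈ {0,1}ⁿ, Σ_{j>k} aⱼzⱼ ≤ p − Σ_{j≤k} aⱼ}. -/

import Mathlib

open Finset

/-- Membership in the mixing set with knapsack constraint `Q`. -/
def memQ (n : ℕ) (h a : Fin n → ℝ) (p : ℝ) (y : ℝ) (z : Fin n → ℝ) : Prop :=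
  0 ≤ y ∧ (∀ j, z j = 0 ∨ z j = 1) ∧ (∑ j, a j * z j) ≤ p ∧ ∀ j, h j ≤ y + h j * z j

/-- Partial sum `s_k = ∑_{j ≤ k} a_j` (1-indexed paper notation; here the first `k`
0-based indices). -/
def sk (n : ℕ) (a : Fin n → ℝ) (k : ℕ) : ℝ :=
  ∑ j ∈ univ.filter (fun j : Fin n => (j : ℕ) < k), a j

/-- Membership in the residual knapsack set `P_k`. -/
def memPk (n : ℕ) (a : Fin n → ℝ) (p : ℝ) (k : ℕ) (z : Fin n → ℝ) : Prop :=
  (∀ j, z j = 0 ∨ z j = 1) ∧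
    (∑ j ∈ univ.filter (fun j : Fin n => k ≤ (j : ℕ)), a j * z j) ≤ p - sk n a k

/-- The minimizer function `f_k(α) = min{ ∑_{j > k} α_j z_j : z ∈ P_k }`. -/
noncomputable def fk (n : ℕ) (a : Fin n → ℝ) (p : ℝ) (α : Fin n → ℝ) (k : ℕ) : ℝ :=
  sInf {x : ℝ | ∃ z : Fin n → ℝ, memPk n a p k z ∧
    x = ∑ j ∈ univ.filter (fun j : Fin n => k ≤ (j : ℕ)), α j * z j}

/-- Validity characterization, forward direction: if `y + ∑ α_j z_j ≥ β` is valid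
for `Q`, then for every `0 ≤ k ≤ ν`, `∑_{j≤k} α_j + f_k(α) + h_{k+1} ≥ β`. -/
theorem stmt5 (n : ℕ) (hn : 0 < n) (h a : Fin n → ℝ) (p : ℝ)
    (hmono : ∀ i j : Fin n, i ≤ j → h j ≤ h i) (hhnn : ∀ j, 0 ≤ h j)
    (hann : ∀ j, 0 ≤ a j) (hap : ∀ j, a j ≤ p) (hsum : p < ∑ j, a j)
    (ν : ℕ) (hνn : ν < n) (hν1 : sk n a ν ≤ p) (hν2 : p < sk n a (ν + 1))
    (α : Fin n → ℝ) (β : ℝ)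
    (hvalid : ∀ (y : ℝ) (z : Fin n → ℝ), memQ n h a p y z →
      β ≤ y + ∑ j, α j * z j) :
    ∀ k : ℕ, ∀ hk : k ≤ ν,
      β ≤ (∑ j ∈ univ.filter (fun j : Fin n => (j : ℕ) < k), α j) +
        fk n a p α k + h ⟨k, lt_of_le_of_lt hk hνn⟩ := by
  intro k hk
  have hkn : k < n := lt_of_le_of_lt hk hνn
  have hskν : sk n a k ≤ sk n a ν := by
    apply Finset.sum_le_sum_of_subset_of_nonneg
    · intro j hj
      simp only [mem_filter, mem_univ, true_and] at *
      omega
    · intro j _ _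
      exact hann j
  have hskp : sk n a k ≤ p := le_trans hskν hν1
  set S : Set ℝ := {x : ℝ | ∃ z : Fin n → ℝ, memPk n a p k z ∧
    x = ∑ j ∈ univ.filter (fun j : Fin n => k ≤ (j : ℕ)), α j * z j} with hS
  have hne : S.Nonempty := by
    refine ⟨0, fun _ => 0, ⟨fun j => Or.inl rfl, ?_⟩, by simp⟩
    simp only [mul_zero, Finset.sum_const_zero]
    linarith
  have key : ∀ x ∈ S, β - h ⟨k, hkn⟩ -
      (∑ j ∈ univ.filter (fun j : Fin n => (j : ℕ) < k), α j) ≤ x := by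
    rintro x ⟨z, ⟨hz01, hzsum⟩, rfl⟩
    set y : ℝ := h ⟨k, hkn⟩ with hy
    set z' : Fin n → ℝ := fun j => if (j : ℕ) < k then 1 else z j with hz'
    have hmem : memQ n h a p y z' := by
      refine ⟨hhnn _, ?_, ?_, ?_⟩
      · intro j
        by_cases hj : (j : ℕ) < k
        · right; simp [hz', hj]
        · simpa [hz', hj] using hz01 j
      · have hsplit : (∑ j, a j * z' j) =
            (∑ j ∈ univ.filter (fun j : Fin n => (j : ℕ) < k), a j * z' j) +
            (∑ j ∈ univ.filter (fun j : Fin n => ¬ ((j : ℕ) < k)), a j * z' j) :=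
          (Finset.sum_filter_add_sum_filter_not _ _ _).symm
        have h1 : (∑ j ∈ univ.filter (fun j : Fin n => (j : ℕ) < k), a j * z' j)
            = sk n a k := by
          apply Finset.sum_congr rfl
          intro j hj
          simp only [mem_filter, mem_univ, true_and] at hj
          simp [hz', hj]
        have h2 : (∑ j ∈ univ.filter (fun j : Fin n => ¬ ((j : ℕ) < k)), a j * z' j)
            = ∑ j ∈ univ.filter (fun j : Fin n => k ≤ (j : ℕ)), a j * z j := by
          apply Finset.sum_congr
          · apply Finset.filter_congr; intro j _; simp [not_lt]
          · intro j hj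
            simp only [mem_filter, mem_univ, true_and, not_lt] at hj
            simp [hz', not_lt.mpr hj]
        rw [hsplit, h1, h2]
        linarith
      · intro j
        by_cases hj : (j : ℕ) < k
        · have : z' j = 1 := by simp [hz', hj]
          rw [this]; have := hhnn (⟨k, hkn⟩ : Fin n); linarith
        · have hje : z' j = z j := by simp [hz', hj]
          rcases hz01 j with h0 | h1
          · rw [hje, h0, mul_zero, add_zero]
            exact hmono ⟨k, hkn⟩ j (Fin.le_def.mpr (not_lt.mp hj))
          · rw [hje, h1, mul_one]
            have := hhnn (⟨k, hkn⟩ : Fin n); linarith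
    have hv := hvalid y z' hmem
    have hsplit : (∑ j, α j * z' j) =
        (∑ j ∈ univ.filter (fun j : Fin n => (j : ℕ) < k), α j * z' j) +
        (∑ j ∈ univ.filter (fun j : Fin n => ¬ ((j : ℕ) < k)), α j * z' j) :=
      (Finset.sum_filter_add_sum_filter_not _ _ _).symm
    have h1 : (∑ j ∈ univ.filter (fun j : Fin n => (j : ℕ) < k), α j * z' j)
        = ∑ j ∈ univ.filter (fun j : Fin n => (j : ℕ) < k), α j := by
      apply Finset.sum_congr rfl
      intro j hj
      simp only [mem_filter, mem_univ, true_and] at hj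
      simp [hz', hj]
    have h2 : (∑ j ∈ univ.filter (fun j : Fin n => ¬ ((j : ℕ) < k)), α j * z' j)
        = ∑ j ∈ univ.filter (fun j : Fin n => k ≤ (j : ℕ)), α j * z j := by
      apply Finset.sum_congr
      · apply Finset.filter_congr; intro j _; simp [not_lt]
      · intro j hj
        simp only [mem_filter, mem_univ, true_and, not_lt] at hj
        simp [hz', not_lt.mpr hj]
    rw [hsplit, h1, h2] at hv
    linarith
  have hinf := le_csInf hne key
  have : fk n a p α k = sInf S := rfl
  rw [this]
  linarith
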